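/- For the query Q = R(a₁,a₂,a₃), S₁(a₁,b₁), S₂(a₂,b₂), S₃(a₃,b₃), T(b₁,b₂,b₃), the fractional edge cover number ρ* equals 2 and the fractional edge packing number τ* equals 3; in particular ρ* < τ*. -/

import Mathlib

/-- Schemas of the query `Q = R(a₁,a₂,a₃), S₁(a₁,b₁), S₂(a₂,b₂), S₃(a₃,b₃),
T(b₁,b₂,b₃)`: attributes `0,1,2` are `a₁,a₂,a₃` and `3,4,5` are `b₁,b₂,b₃`. -/
def hcSchema : Fin 5 → Finset (Fin 6) :=
  ![{0, 1, 2}, {0, 3}, {1, 4}, {2, 5}, {3, 4, 5}]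

/-- For this query the fractional edge cover number `ρ*` equals `2` and the
fractional edge packing number `τ*` equals `3`; in particular `ρ* < τ*`. -/
theorem hypercube_example_cover_packing :
    IsLeast {x : ℝ | ∃ e : Fin 5 → ℝ, (∀ i, 0 ≤ e i) ∧
        (∀ a : Fin 6, 1 ≤ ∑ i, if a ∈ hcSchema i then e i else 0) ∧
        x = ∑ i, e i} 2 ∧
    IsGreatest {x : ℝ | ∃ e : Fin 5 → ℝ, (∀ i, 0 ≤ e i) ∧
        (∀ a : Fin 6, (∑ i, if a ∈ hcSchema i then e i else 0) ≤ 1) ∧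
        x = ∑ i, e i} 3 ∧
    (2 : ℝ) < 3 := by
  refine ⟨⟨⟨![1,0,0,0,1], ?_, ?_, ?_⟩, ?_⟩, ⟨⟨![0,1,1,1,0], ?_, ?_, ?_⟩, ?_⟩, by norm_num⟩
  · intro i; fin_cases i <;> norm_num
  · intro a; fin_cases a <;> simp [Fin.sum_univ_five, hcSchema] <;> norm_num
  · norm_num [Fin.sum_univ_succ]
  · rintro x ⟨e, hpos, hcov, rfl⟩
    have h0 := hcov 0
    have h1 := hcov 1
    have h2 := hcov 2
    have h3 := hcov 3
    have h4 := hcov 4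
    have h5 := hcov 5
    simp [Fin.sum_univ_five, hcSchema] at h0 h1 h2 h3 h4 h5 ⊢
    have := hpos 0; have := hpos 1; have := hpos 2; have := hpos 3; have := hpos 4
    linarith
  · intro i; fin_cases i <;> norm_num
  · intro a; fin_cases a <;> simp [Fin.sum_univ_five, hcSchema] <;> norm_num
  · norm_num [Fin.sum_univ_succ]
  · rintro x ⟨e, hpos, hcov, rfl⟩
    have h0 := hcov 0
    have h4 := hcov 4
    have h5 := hcov 5
    simp [Fin.sum_univ_five, hcSchema] at h0 h4 h5 ⊢
    have := hpos 0; have := hpos 1; have := hpos 2; have := hpos 3; have := hpos 4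
    linarith
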